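/- Let m, d, n be positive integers with n odd, and set d' = nd - (n-1)/2. Then λ_{mn}^{d'} ≥ s(n)^m · λ_m^d, where λ_m^d denotes the number of Langford sequences of order m and defect d, and s(n) denotes the number of permutations σ of {1,...,n} for which the set {i + σ(i) : 1 ≤ i ≤ n} consists of n consecutive integers. -/

import Mathlib

/-- A Langford sequence of order `m` and defect `d`, modeled as a function
`l : Fin (2*m) → ℕ`: for every `k ∈ [d, d+m-1]` there are exactly two subscripts
carrying the value `k`, and they differ by exactly `k`. -/
def IsLangford (m d : ℕ) (l : Fin (2 * m) → ℕ) : Prop :=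
  ∀ k : ℕ, d ≤ k → k ≤ d + m - 1 →
    ∃ i j : Fin (2 * m), i < j ∧ (j : ℕ) - (i : ℕ) = k ∧
      (∀ t : Fin (2 * m), l t = k ↔ t = i ∨ t = j)

/-- `λ_m^d`: the number of Langford sequences of order `m` and defect `d`. -/
noncomputable def langfordCount (m d : ℕ) : ℕ :=
  Nat.card {l : Fin (2 * m) → ℕ // IsLangford m d l}

/-- A super edge-magic permutation of `{1,…,n}` (modeled on `Fin n` via the shift by `1`):
the set of sums `{i + σ(i)}` consists of `n` consecutive integers. -/
def IsSEMPerm (n : ℕ) (σ : Equiv.Perm (Fin n)) : Prop :=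
  ∃ s : ℕ,
    Finset.image (fun i : Fin n => ((i : ℕ) + 1) + ((σ i : ℕ) + 1)) Finset.univ =
      Finset.Icc s (s + n - 1)

/-- `s(n)`: the number of super edge-magic permutations of `{1,…,n}`. -/
noncomputable def semPermCount (n : ℕ) : ℕ :=
  Nat.card {σ : Equiv.Perm (Fin n) // IsSEMPerm n σ}

open Finset in
lemma sem_facts {n h : ℕ} (hn : n = 2*h+1) {σ : Equiv.Perm (Fin n)} (hσ : IsSEMPerm n σ) :
    (∀ i : Fin n, h ≤ (i:ℕ) + (σ i:ℕ) ∧ (i:ℕ) + (σ i:ℕ) ≤ 3*h) ∧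
    (∀ i j : Fin n, (i:ℕ) + (σ i:ℕ) = (j:ℕ) + (σ j:ℕ) → i = j) ∧
    (∀ v : ℕ, h ≤ v → v ≤ 3*h → ∃ i : Fin n, (i:ℕ) + (σ i:ℕ) = v) := by
  obtain ⟨s, hs⟩ := hσ
  set f : Fin n → ℕ := fun i => ((i : ℕ) + 1) + ((σ i : ℕ) + 1) with hf
  have hn0 : 0 < n := by omega
  have hcard : (Finset.image f Finset.univ).card = n := by
    rw [hs, Nat.card_Icc]; omega
  have hinj : Set.InjOn f (Finset.univ : Finset (Fin n)) := by
    rw [← Finset.card_image_iff]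
    simp [hcard]
  have hsum : ∑ x ∈ Finset.Icc s (s + n - 1), x = ∑ i : Fin n, f i := by
    rw [← hs, Finset.sum_image (fun a ha b hb => hinj ha hb)]
  -- compute both sides
  have hIcc : Finset.Icc s (s + n - 1) = Finset.image (fun j => s + j) (Finset.range n) := by
    ext x
    simp only [Finset.mem_Icc, Finset.mem_image, Finset.mem_range]
    constructor
    · intro ⟨h1, h2⟩; exact ⟨x - s, by omega, by omega⟩
    · rintro ⟨j, hj, rfl⟩; omega
  have hL : ∑ x ∈ Finset.Icc s (s + n - 1), x = n * s + n * (n-1) / 2 := by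
    rw [hIcc, Finset.sum_image (by intro a _ b _ hab; beta_reduce at hab; omega), Finset.sum_add_distrib,
      Finset.sum_const, Finset.card_range, Finset.sum_range_id, smul_eq_mul]
  have hsig : ∑ i : Fin n, ((σ i : ℕ)) = ∑ i : Fin n, (i:ℕ) := Equiv.sum_comp σ _
  have hfin : ∑ i : Fin n, (i:ℕ) = n * (n-1) / 2 := by
    simp [Fin.sum_univ_eq_sum_range (fun i => i) n, Finset.sum_range_id]
  have hR : ∑ i : Fin n, f i = 2 * (n * (n-1)/2) + 2 * n := by
    simp only [hf]
    rw [Finset.sum_add_distrib, Finset.sum_add_distrib, Finset.sum_add_distrib,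
      Finset.sum_const, Finset.card_univ, Fintype.card_fin, hsig, hfin]
    simp; ring
  have hhalf : n * (n-1) / 2 = (2*h+1) * h := by
    subst hn
    rw [show 2*h+1-1 = 2*h by omega, show (2*h+1)*(2*h) = ((2*h+1)*h)*2 by ring,
      Nat.mul_div_cancel _ two_pos]
  have hseq : s = h + 2 := by
    rw [hL, hR, hhalf, hn] at hsum
    have : (2*h+1) * (s + h) = (2*h+1) * (2*h+2) := by
      calc (2*h+1) * (s + h) = (2*h+1)*s + (2*h+1)*h := by ring
        _ = 2 * ((2*h+1)*h) + 2*(2*h+1) := hsum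
        _ = (2*h+1) * (2*h+2) := by ring
    have := Nat.eq_of_mul_eq_mul_left (by omega : 0 < 2*h+1) this
    omega
  subst hseq
  have hmem : ∀ i : Fin n, f i ∈ Finset.Icc (h+2) (h+2+n-1) := by
    intro i; rw [← hs]; exact Finset.mem_image_of_mem f (Finset.mem_univ i)
  refine ⟨fun i => ?_, fun i j hij => ?_, fun v hv1 hv2 => ?_⟩
  · have := hmem i; rw [Finset.mem_Icc] at this; simp only [hf] at this; omega
  · exact hinj (Finset.mem_univ i) (Finset.mem_univ j) (by simp only [hf]; omega)
  · have : v + 2 ∈ Finset.Icc (h+2) (h+2+n-1) := by rw [Finset.mem_Icc]; omega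
    rw [← hs] at this
    obtain ⟨i, _, hi⟩ := Finset.mem_image.mp this
    exact ⟨i, by simp only [hf] at hi; omega⟩

lemma langford_mem {M D : ℕ} (hM : 0 < M) {l : Fin (2*M) → ℕ} (hl : IsLangford M D l)
    (t : Fin (2*M)) : D ≤ l t ∧ l t ≤ D + M - 1 := by
  classical
  have hfil : ∀ k ∈ Finset.Icc D (D+M-1),
      (Finset.univ.filter (fun t : Fin (2*M) => l t = k)).card = 2 := by
    intro k hk
    rw [Finset.mem_Icc] at hk
    obtain ⟨i, j, hij, _, hiff⟩ := hl k hk.1 hk.2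
    have : Finset.univ.filter (fun t : Fin (2*M) => l t = k) = {i, j} := by
      ext x; simp [hiff x]
    rw [this, Finset.card_insert_of_notMem (by simp [hij.ne]), Finset.card_singleton]
  set T := Finset.univ.filter (fun t : Fin (2*M) => l t ∈ Finset.Icc D (D+M-1)) with hT
  have hTb : T = (Finset.Icc D (D+M-1)).biUnion
      (fun k => Finset.univ.filter (fun t : Fin (2*M) => l t = k)) := by
    ext x
    simp only [hT, Finset.mem_filter, Finset.mem_biUnion, Finset.mem_univ, true_and]
    constructor
    · intro hx; exact ⟨l x, hx, rfl⟩
    · rintro ⟨k, hk, rfl⟩; exact hk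
  have hdisj : ∀ k1 ∈ Finset.Icc D (D+M-1), ∀ k2 ∈ Finset.Icc D (D+M-1), k1 ≠ k2 →
      Disjoint (Finset.univ.filter (fun t : Fin (2*M) => l t = k1))
        (Finset.univ.filter (fun t : Fin (2*M) => l t = k2)) := by
    intro k1 _ k2 _ hne
    rw [Finset.disjoint_left]
    intro x hx1 hx2
    simp only [Finset.mem_filter] at hx1 hx2
    exact hne (hx1.2 ▸ hx2.2 ▸ rfl)
  have hcardT : T.card = 2 * M := by
    rw [hTb, Finset.card_biUnion hdisj, Finset.sum_congr rfl hfil, Finset.sum_const,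
      Nat.card_Icc, smul_eq_mul]
    have : D + M - 1 + 1 - D = M := by omega
    rw [this]; ring
  have hTuniv : T = Finset.univ := by
    apply Finset.eq_univ_of_card
    rw [hcardT, Fintype.card_fin]
  have ht : t ∈ T := hTuniv ▸ Finset.mem_univ t
  rw [hT, Finset.mem_filter, Finset.mem_Icc] at ht
  exact ht.2

lemma langford_finite (M D : ℕ) : Finite {l : Fin (2*M) → ℕ // IsLangford M D l} := by
  rcases Nat.eq_zero_or_pos M with hM | hM
  · subst hM
    haveI : IsEmpty (Fin (2*0)) := by simp; infer_instance
    exact Finite.of_injective (fun _ => ())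
      (fun a b _ => Subtype.ext (funext fun x => (IsEmpty.false x).elim))
  · apply Finite.of_injective
      (β := Fin (2*M) → Fin (D+M+1))
      (fun l => fun t => ⟨min (l.1 t) (D+M), by omega⟩)
    intro a b hab
    ext t
    have ha := langford_mem hM a.2 t
    have hb := langford_mem hM b.2 t
    have := congrFun hab t
    simp only [Fin.mk.injEq] at this
    omega

lemma pos_bound {m n : ℕ} (b : Fin (2*m)) (o : Fin n) : n*(b:ℕ) + (o:ℕ) < 2*(m*n) := by
  calc n*(b:ℕ) + (o:ℕ) < n*((b:ℕ)+1) := by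
        rw [Nat.mul_add, Nat.mul_one]; exact Nat.add_lt_add_left o.2 _
    _ ≤ n*(2*m) := Nat.mul_le_mul_left n b.2
    _ = 2*(m*n) := by ring

noncomputable def build (m d n : ℕ) (hn : 0 < n) (σ : ℕ → Equiv.Perm (Fin n))
    (l : Fin (2*m) → ℕ) (p : Fin (2*(m*n))) : ℕ :=
  let b : Fin (2*m) := ⟨(p:ℕ)/n,
    Nat.div_lt_of_lt_mul (by rw [show n*(2*m) = 2*(m*n) by ring]; exact p.2)⟩
  let o : Fin n := ⟨(p:ℕ) % n, Nat.mod_lt _ hn⟩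
  letI := Classical.propDecidable (∃ b' : Fin (2*m), b < b' ∧ l b' = l b)
  if ∃ b' : Fin (2*m), b < b' ∧ l b' = l b then
    n * l b + n - 1 - (o:ℕ) - ((σ (l b - d)) o : ℕ)
  else
    n * l b + (o:ℕ) - (((σ (l b - d)).symm ⟨n - 1 - (o:ℕ), by omega⟩ : Fin n) : ℕ)

lemma build_eq_left {m d n : ℕ} {hn : 0 < n} {σ : ℕ → Equiv.Perm (Fin n)}
    {l : Fin (2*m) → ℕ} {p : Fin (2*(m*n))} {b : Fin (2*m)} {o : Fin n}
    (hp : (p:ℕ) = n*(b:ℕ) + (o:ℕ)) (hbl : ∃ b' : Fin (2*m), b < b' ∧ l b' = l b) :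
    build m d n hn σ l p = n * l b + n - 1 - (o:ℕ) - ((σ (l b - d)) o : ℕ) := by
  have h1 : (p:ℕ)/n = (b:ℕ) := by
    rw [hp, Nat.mul_add_div hn, Nat.div_eq_of_lt o.2, add_zero]
  have h2 : (p:ℕ) % n = (o:ℕ) := by
    rw [hp, Nat.mul_add_mod, Nat.mod_eq_of_lt o.2]
  unfold build
  simp only [h1, h2, Fin.eta]
  rw [if_pos hbl]

lemma build_eq_right {m d n : ℕ} {hn : 0 < n} {σ : ℕ → Equiv.Perm (Fin n)}
    {l : Fin (2*m) → ℕ} {p : Fin (2*(m*n))} {b : Fin (2*m)} {o : Fin n}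
    (hp : (p:ℕ) = n*(b:ℕ) + (o:ℕ)) (hbl : ¬ ∃ b' : Fin (2*m), b < b' ∧ l b' = l b) :
    build m d n hn σ l p
      = n * l b + (o:ℕ) - (((σ (l b - d)).symm ⟨n - 1 - (o:ℕ), by omega⟩ : Fin n) : ℕ) := by
  have h1 : (p:ℕ)/n = (b:ℕ) := by
    rw [hp, Nat.mul_add_div hn, Nat.div_eq_of_lt o.2, add_zero]
  have h2 : (p:ℕ) % n = (o:ℕ) := by
    rw [hp, Nat.mul_add_mod, Nat.mod_eq_of_lt o.2]
  unfold build
  simp only [h1, h2, Fin.eta]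
  rw [if_neg hbl]

lemma symm_mk {n : ℕ} (σ : Equiv.Perm (Fin n)) (i : Fin n) (x : ℕ) (hx : x < n)
    (hxe : x = (σ i : ℕ)) : σ.symm ⟨x, hx⟩ = i := by
  subst hxe
  simp

set_option maxHeartbeats 1000000 in
lemma build_langford {m d n h : ℕ} (hn0 : 0 < n) (hm : 0 < m) (hd : 0 < d)
    (hnh : n = 2*h+1)
    (σ : ℕ → Equiv.Perm (Fin n)) (hσ : ∀ q, q < m → IsSEMPerm n (σ q))
    {l : Fin (2*m) → ℕ} (hl : IsLangford m d l) :
    IsLangford (m*n) (n*d - h) (build m d n hn0 σ l) := by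
  intro K hK1 hK2
  have hnd : n ≤ n*d := Nat.le_mul_of_pos_right n hd
  have hmn : m*n = n*m := Nat.mul_comm m n
  obtain ⟨k, r, hr, hkr⟩ : ∃ k r, r < n ∧ K + h = n*k + r :=
    ⟨(K+h)/n, (K+h)%n, Nat.mod_lt _ hn0, (Nat.div_add_mod _ _).symm⟩
  have hdk : d ≤ k := by
    have : n*d < n*(k+1) := by rw [show n*(k+1) = n*k + n by ring]; omega
    have := Nat.lt_of_mul_lt_mul_left this
    omega
  have hkub : k ≤ d + m - 1 := by
    have : n*k < n*(d+m) := by rw [show n*(d+m) = n*d + n*m by ring]; omega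
    have := Nat.lt_of_mul_lt_mul_left this
    omega
  obtain ⟨hbnd, hinj, hsurj⟩ := sem_facts hnh (hσ (k-d) (by omega))
  have hnk : n ≤ n*k := Nat.le_mul_of_pos_right n (by omega)
  obtain ⟨i, hi⟩ := hsurj (n*k + n - 1 - K) (by omega) (by omega)
  obtain ⟨a, b, hab, hdiff, hiff⟩ := hl k hdk hkub
  have hla : l a = k := (hiff a).2 (Or.inl rfl)
  have hlb : l b = k := (hiff b).2 (Or.inr rfl)
  have haL : ∃ b' : Fin (2*m), a < b' ∧ l b' = l a := ⟨b, hab, by rw [hlb, hla]⟩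
  have hbR : ¬ ∃ b' : Fin (2*m), b < b' ∧ l b' = l b := by
    rintro ⟨b', hbb', hlb'⟩
    rcases (hiff b').1 (by rw [hlb', hlb]) with rfl | rfl
    · exact absurd hbb' (not_lt.2 hab.le)
    · exact lt_irrefl _ hbb'
  have hab' : (a:ℕ) < (b:ℕ) := hab
  have hba : (b:ℕ) = (a:ℕ) + k := by omega
  have hsib : ((σ (k-d)) i : ℕ) < n := ((σ (k-d)) i).2
  have enab : n*((a:ℕ)+k) = n*(a:ℕ) + n*k := by ring
  have enb : n*(b:ℕ) = n*((a:ℕ)+k) := by rw [hba]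
  refine ⟨⟨n*(a:ℕ) + (i:ℕ), pos_bound a i⟩,
    ⟨n*(b:ℕ) + (n - 1 - ((σ (k-d)) i : ℕ)), pos_bound b ⟨n - 1 - ((σ (k-d)) i : ℕ), by omega⟩⟩,
    ?_, ?_, ?_⟩
  · show n*(a:ℕ) + (i:ℕ) < n*(b:ℕ) + (n - 1 - ((σ (k-d)) i : ℕ))
    have := i.2
    omega
  · show n*(b:ℕ) + (n - 1 - ((σ (k-d)) i : ℕ)) - (n*(a:ℕ) + (i:ℕ)) = K
    omega
  · intro t
    constructor
    · intro ht
      have hBlt : (t:ℕ)/n < 2*m :=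
        Nat.div_lt_of_lt_mul (by rw [show n*(2*m) = 2*(m*n) by ring]; exact t.2)
      have htp : (t:ℕ) = n*((⟨(t:ℕ)/n, hBlt⟩ : Fin (2*m)):ℕ)
          + ((⟨(t:ℕ) % n, Nat.mod_lt _ hn0⟩ : Fin n):ℕ) := by
        have := Nat.div_add_mod (t:ℕ) n
        simp only []
        omega
      set B : Fin (2*m) := ⟨(t:ℕ)/n, hBlt⟩
      set O : Fin n := ⟨(t:ℕ) % n, Nat.mod_lt _ hn0⟩
      have hkB := langford_mem hm hl B
      obtain ⟨k0, hk0⟩ : ∃ k0, l B = k0 := ⟨_, rfl⟩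
      rw [hk0] at hkB
      have hnk0 : n ≤ n*k0 := Nat.le_mul_of_pos_right n (by omega)
      obtain ⟨hbnd0, hinj0, -⟩ := sem_facts hnh (hσ (k0-d) (by omega))
      have hOn : (O:ℕ) < n := O.2
      by_cases hcond : ∃ b' : Fin (2*m), B < b' ∧ l b' = l B
      · rw [build_eq_left htp hcond, hk0] at ht
        -- ht : n * k0 + n - 1 - O - σ (k0-d) O = K
        have hsum0 := hbnd0 O
        have hσO : ((σ (k0-d)) O : ℕ) < n := ((σ (k0-d)) O).2
        have hkk : k0 = k := by
          have c1 : k0 < k + 1 := Nat.lt_of_mul_lt_mul_left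
            (show n*k0 < n*(k+1) by rw [show n*(k+1) = n*k + n by ring]; omega)
          have c2 : k < k0 + 1 := Nat.lt_of_mul_lt_mul_left
            (show n*k < n*(k0+1) by rw [show n*(k0+1) = n*k0 + n by ring]; omega)
          omega
        rw [hkk] at ht hbnd0 hinj0 hsum0
        have hOi : O = i := hinj0 O i (by omega)
        left
        apply Fin.ext
        show (t:ℕ) = n*(a:ℕ) + (i:ℕ)
        have hBa : B = a := by
          rcases (hiff B).1 (by rw [hk0, hkk]) with hBa | hBb
          · exact hBa
          · rw [hBb] at hcond; exact absurd hcond hbR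
        rw [htp, hBa, hOi]
      · have hx : n - 1 - (O:ℕ) < n := by omega
        have ht' : n * k0 + (O:ℕ) - (((σ (k0-d)).symm ⟨n - 1 - (O:ℕ), hx⟩ : Fin n) : ℕ) = K := by
          have := build_eq_right (d := d) (hn := hn0) (σ := σ) htp hcond
          rw [this, hk0] at ht
          exact ht
        have hσi0 : ((σ (k0-d)) ((σ (k0-d)).symm ⟨n - 1 - (O:ℕ), hx⟩) : ℕ) = n - 1 - (O:ℕ) := by
          rw [Equiv.apply_symm_apply]
        obtain ⟨i0, hi0⟩ : ∃ i0 : Fin n, (σ (k0-d)).symm ⟨n - 1 - (O:ℕ), hx⟩ = i0 := ⟨_, rfl⟩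
        rw [hi0] at ht' hσi0
        have hsum0 := hbnd0 i0
        have hi0n : (i0:ℕ) < n := i0.2
        have hkk : k0 = k := by
          have c1 : k0 < k + 1 := Nat.lt_of_mul_lt_mul_left
            (show n*k0 < n*(k+1) by rw [show n*(k+1) = n*k + n by ring]; omega)
          have c2 : k < k0 + 1 := Nat.lt_of_mul_lt_mul_left
            (show n*k < n*(k0+1) by rw [show n*(k0+1) = n*k0 + n by ring]; omega)
          omega
        rw [hkk] at ht' hbnd0 hinj0 hsum0 hσi0
        have hOi : i0 = i := hinj0 i0 i (by omega)
        rw [hOi] at hσi0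
        right
        apply Fin.ext
        show (t:ℕ) = n*(b:ℕ) + (n - 1 - ((σ (k-d)) i : ℕ))
        have hBb : B = b := by
          rcases (hiff B).1 (by rw [hk0, hkk]) with hBa | hBb
          · rw [hBa] at hcond; exact absurd haL hcond
          · exact hBb
        rw [htp, hBb]
        omega
    · rintro (rfl | rfl)
      · have E := build_eq_left (d := d) (hn := hn0) (σ := σ) (l := l)
          (p := ⟨n*(a:ℕ) + (i:ℕ), pos_bound a i⟩) (b := a) (o := i) rfl haL
        refine E.trans ?_
        simp only [hla]
        omega
      · have E := build_eq_right (d := d) (hn := hn0) (σ := σ) (l := l)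
          (p := ⟨n*(b:ℕ) + (n - 1 - ((σ (k-d)) i : ℕ)),
            pos_bound b ⟨n - 1 - ((σ (k-d)) i : ℕ), by omega⟩⟩) (b := b)
          (o := ⟨n - 1 - ((σ (k-d)) i : ℕ), by omega⟩) rfl hbR
        refine E.trans ?_
        simp only [hlb]
        rw [symm_mk (σ (k - d)) i _ _ (by omega)]
        omega

/-- Recover the block value: `build` at the first position of block `b` lies within
`h` of `n * l b`. -/
lemma build_block {m d n h : ℕ} (hn0 : 0 < n) (hm : 0 < m) (hd : 0 < d)
    (hnh : n = 2*h+1)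
    (σ : ℕ → Equiv.Perm (Fin n)) (hσ : ∀ q, q < m → IsSEMPerm n (σ q))
    {l : Fin (2*m) → ℕ} (hl : IsLangford m d l)
    (b : Fin (2*m)) (p : Fin (2*(m*n))) (hp : (p:ℕ) = n*(b:ℕ)) :
    n * (l b) ≤ build m d n hn0 σ l p + h ∧ build m d n hn0 σ l p + h < n * (l b) + n := by
  have hkB := langford_mem hm hl b
  have hnk0 : n ≤ n*(l b) := Nat.le_mul_of_pos_right n (by omega)
  obtain ⟨hbnd0, -, -⟩ := sem_facts hnh (hσ (l b - d) (by omega))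
  have hp' : (p:ℕ) = n*(b:ℕ) + ((⟨0, hn0⟩ : Fin n) : ℕ) := by simp [hp]
  by_cases hcond : ∃ b' : Fin (2*m), b < b' ∧ l b' = l b
  · rw [build_eq_left hp' hcond]
    have hs := hbnd0 ⟨0, hn0⟩
    have hσ0 : ((σ (l b - d)) ⟨0, hn0⟩ : ℕ) < n := ((σ (l b - d)) ⟨0, hn0⟩).2
    omega
  · rw [build_eq_right hp' hcond]
    have hx : n - 1 - ((⟨0, hn0⟩ : Fin n):ℕ) < n := by omega
    have hσi0 : ((σ (l b - d)) ((σ (l b - d)).symm ⟨n - 1 - ((⟨0, hn0⟩ : Fin n):ℕ), hx⟩) : ℕ)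
        = n - 1 - ((⟨0, hn0⟩ : Fin n):ℕ) := by rw [Equiv.apply_symm_apply]
    have hs := hbnd0 ((σ (l b - d)).symm ⟨n - 1 - ((⟨0, hn0⟩ : Fin n):ℕ), hx⟩)
    have hi0 : (((σ (l b - d)).symm ⟨n - 1 - ((⟨0, hn0⟩ : Fin n):ℕ), hx⟩ : Fin n) : ℕ) < n :=
      ((σ (l b - d)).symm _).2
    omega

/-- Extend a finite family of permutations to all of `ℕ`. -/
noncomputable def extFam {n : ℕ} (m : ℕ)
    (f : Fin m → {σ : Equiv.Perm (Fin n) // IsSEMPerm n σ}) : ℕ → Equiv.Perm (Fin n) :=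
  fun q => if hq : q < m then (f ⟨q, hq⟩).1 else 1

lemma extFam_lt {n m : ℕ} (f : Fin m → {σ : Equiv.Perm (Fin n) // IsSEMPerm n σ})
    {q : ℕ} (hq : q < m) : extFam m f q = (f ⟨q, hq⟩).1 := dif_pos hq

lemma extFam_sem {n m : ℕ} (f : Fin m → {σ : Equiv.Perm (Fin n) // IsSEMPerm n σ}) :
    ∀ q, q < m → IsSEMPerm n (extFam m f q) := fun q hq => by
  rw [extFam_lt f hq]; exact (f ⟨q, hq⟩).2

set_option maxHeartbeats 1000000 in
/-- `λ_{mn}^{d'} ≥ s(n)^m · λ_m^d` where `d' = n*d - (n-1)/2`. -/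
theorem langford_count_product (m d n : ℕ) (hm : 0 < m) (hd : 0 < d) (hn : 0 < n)
    (hodd : Odd n) :
    semPermCount n ^ m * langfordCount m d ≤ langfordCount (m * n) (n * d - (n - 1) / 2) := by
  obtain ⟨h, hnh⟩ : ∃ h, n = 2*h+1 := ⟨(n-1)/2, by obtain ⟨j, hj⟩ := hodd; omega⟩
  have hE : n*d - (n-1)/2 = n*d - h := by omega
  rw [hE]
  have hn0 : 0 < n := hn
  let F : (Fin m → {σ : Equiv.Perm (Fin n) // IsSEMPerm n σ})
        × {l : Fin (2*m) → ℕ // IsLangford m d l}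
      → {l' : Fin (2*(m*n)) → ℕ // IsLangford (m*n) (n*d - h) l'} :=
    fun x => ⟨build m d n hn0 (extFam m x.1) x.2.1,
      build_langford hn0 hm hd hnh (extFam m x.1) (extFam_sem x.1) x.2.2⟩
  have hF : Function.Injective F := by
    rintro ⟨f1, l1, hl1⟩ ⟨f2, l2, hl2⟩ hxy
    have hbuild : build m d n hn0 (extFam m f1) l1 = build m d n hn0 (extFam m f2) l2 :=
      congrArg Subtype.val hxy
    have hleq : l1 = l2 := by
      funext b
      have hbp : (((⟨n*(b:ℕ) + ((⟨0, hn0⟩ : Fin n):ℕ),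
          pos_bound b ⟨0, hn0⟩⟩ : Fin (2*(m*n))):Fin (2*(m*n))) : ℕ) = n*(b:ℕ) := by simp
      have h1 := build_block hn0 hm hd hnh (extFam m f1) (extFam_sem f1) hl1 b _ hbp
      have h2 := build_block hn0 hm hd hnh (extFam m f2) (extFam_sem f2) hl2 b _ hbp
      rw [hbuild] at h1
      have c1 : l1 b < l2 b + 1 := Nat.lt_of_mul_lt_mul_left
        (show n*(l1 b) < n*(l2 b + 1) by rw [show n*(l2 b + 1) = n*(l2 b) + n by ring]; omega)
      have c2 : l2 b < l1 b + 1 := Nat.lt_of_mul_lt_mul_left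
        (show n*(l2 b) < n*(l1 b + 1) by rw [show n*(l1 b + 1) = n*(l1 b) + n by ring]; omega)
      omega
    have hperm : f1 = f2 := by
      funext qq
      apply Subtype.ext
      apply Equiv.ext
      intro i
      have hk1 : d ≤ d + (qq:ℕ) := Nat.le_add_right d _
      have hk2 : d + (qq:ℕ) ≤ d + m - 1 := by have := qq.2; omega
      obtain ⟨a, b, hab, hdiff, hiff⟩ := hl1 (d + (qq:ℕ)) hk1 hk2
      have hla : l1 a = d + (qq:ℕ) := (hiff a).2 (Or.inl rfl)
      have hlb : l1 b = d + (qq:ℕ) := (hiff b).2 (Or.inr rfl)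
      have haL : ∃ b', a < b' ∧ l1 b' = l1 a := ⟨b, hab, by rw [hlb, hla]⟩
      have haLy : ∃ b', a < b' ∧ l2 b' = l2 a := hleq ▸ haL
      have E1 := build_eq_left (d := d) (hn := hn0) (σ := extFam m f1) (l := l1)
        (p := ⟨n*(a:ℕ) + (i:ℕ), pos_bound a i⟩) (b := a) (o := i) rfl haL
      have E2 := build_eq_left (d := d) (hn := hn0) (σ := extFam m f2) (l := l2)
        (p := ⟨n*(a:ℕ) + (i:ℕ), pos_bound a i⟩) (b := a) (o := i) rfl haLy
      have E12 : n * l1 a + n - 1 - (i:ℕ) - ((extFam m f1 (l1 a - d)) i : ℕ)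
          = n * l2 a + n - 1 - (i:ℕ) - ((extFam m f2 (l2 a - d)) i : ℕ) :=
        E1.symm.trans ((congrFun hbuild _).trans E2)
      have hla2 : l2 a = d + (qq:ℕ) := by rw [← hleq]; exact hla
      rw [hla, hla2] at E12
      have hq : d + (qq:ℕ) - d = (qq:ℕ) := by omega
      rw [hq, extFam_lt f1 qq.2, extFam_lt f2 qq.2] at E12
      have heta : (⟨(qq:ℕ), qq.2⟩ : Fin m) = qq := Fin.eta qq qq.2
      rw [heta] at E12
      have hnk : n ≤ n * (d + (qq:ℕ)) := Nat.le_mul_of_pos_right n (by omega)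
      have hb1 : (((f1 qq).1) i : ℕ) < n := (((f1 qq).1) i).2
      have hb2 : (((f2 qq).1) i : ℕ) < n := (((f2 qq).1) i).2
      have hin : (i:ℕ) < n := i.2
      exact Fin.ext (by omega)
    exact Prod.ext hperm (Subtype.ext hleq)
  haveI := langford_finite (m*n) (n*d - h)
  have hcard := Nat.card_le_card_of_injective F hF
  have e1 : Nat.card (Fin m → {σ : Equiv.Perm (Fin n) // IsSEMPerm n σ})
      = semPermCount n ^ m := by
    rw [Nat.card_pi]
    simp [semPermCount]
  rw [Nat.card_prod, e1] at hcard
  exact hcard
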